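/- Let (G,p) be a framework with projected Gram matrix X = V^T P P^T V (P^T e = 0, V^T e = 0, V^T V = I). Exactly one of the following holds: (1) there exists y ∈ R^{m̄} with X + Σ_{{i,j} missing} y_ij M^{ij} positive definite, where M^{ij} = -½ V^T E^{ij} V; (2) there exists a nonzero PSD matrix Y of order n-1 with XY = 0 and trace(Y M^{ij}) = 0 for all missing edges {i,j}. -/

import Mathlib

open Matrix BigOperators

set_option linter.unusedSectionVars false
set_option maxHeartbeats 1000000

namespace Stmt13Aux

variable {ι : Type*} [Fintype ι] [DecidableEq ι]

lemma isHermitian_iff_transpose {A : Matrix ι ι ℝ} : A.IsHermitian ↔ Aᵀ = A := by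
  rw [Matrix.IsHermitian, conjTranspose_eq_transpose_of_trivial]

lemma dotProduct_self_pos {x : ι → ℝ} (hx : x ≠ 0) : 0 < x ⬝ᵥ x := by
  rcases (Finset.sum_nonneg fun i _ => mul_self_nonneg (x i)).lt_or_eq with h | h
  · exact h
  · exact absurd (dotProduct_self_eq_zero.mp h.symm) hx

lemma trace_transpose_mul_self (C : Matrix ι ι ℝ) :
    (Cᵀ * C).trace = ∑ j, ∑ i, (C i j) ^ 2 := by
  simp [Matrix.trace, Matrix.diag, Matrix.mul_apply, sq]

lemma trace_eq_sq {A B : Matrix ι ι ℝ} (hA : A.PosSemidef) (hB : B.PosSemidef) :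
    ∃ C : Matrix ι ι ℝ, (A * B).trace = ∑ j, ∑ i, (C i j) ^ 2 ∧ (C = 0 → A * B = 0) := by
  obtain ⟨a, ha, haA⟩ : ∃ a : Matrix ι ι ℝ, aᵀ = a ∧ a * a = A :=
    by open scoped MatrixOrder in exact ⟨CFC.sqrt A, isHermitian_iff_transpose.mp (CFC.sqrt_nonneg A).posSemidef.isHermitian, CFC.sqrt_mul_sqrt_self A hA.nonneg⟩
  obtain ⟨b, hb, hbB⟩ : ∃ b : Matrix ι ι ℝ, bᵀ = b ∧ b * b = B :=
    by open scoped MatrixOrder in exact ⟨CFC.sqrt B, isHermitian_iff_transpose.mp (CFC.sqrt_nonneg B).posSemidef.isHermitian, CFC.sqrt_mul_sqrt_self B hB.nonneg⟩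
  refine ⟨b * a, ?_, ?_⟩
  · rw [← trace_transpose_mul_self, transpose_mul, ha, hb, ← haA, ← hbB]
    rw [show a * a * (b * b) = a * (a * b * b) by noncomm_ring, trace_mul_comm,
      show a * b * b * a = a * b * (b * a) by noncomm_ring]
  · intro hC
    have hab : a * b = 0 := by
      have : (b * a)ᵀ = a * b := by rw [transpose_mul, ha, hb]
      rw [hC] at this; simpa using this.symm
    rw [← haA, ← hbB, show a * a * (b * b) = a * (a * b) * b by noncomm_ring, hab]
    simp

lemma trace_mul_nonneg {A B : Matrix ι ι ℝ} (hA : A.PosSemidef) (hB : B.PosSemidef) :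
    0 ≤ (A * B).trace := by
  obtain ⟨C, hC, -⟩ := trace_eq_sq hA hB
  rw [hC]
  exact Finset.sum_nonneg fun j _ => Finset.sum_nonneg fun i _ => sq_nonneg _

lemma mul_eq_zero_of_trace_eq_zero {A B : Matrix ι ι ℝ} (hA : A.PosSemidef)
    (hB : B.PosSemidef) (h : (A * B).trace = 0) : A * B = 0 := by
  obtain ⟨C, hC, hC0⟩ := trace_eq_sq hA hB
  rw [hC] at h
  refine hC0 ?_
  ext i j
  have := (Finset.sum_eq_zero_iff_of_nonneg
    (fun j _ => Finset.sum_nonneg fun i _ => sq_nonneg (C i j))).mp h j (Finset.mem_univ _)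
  have := (Finset.sum_eq_zero_iff_of_nonneg (fun i _ => sq_nonneg (C i j))).mp this i
    (Finset.mem_univ _)
  simpa using pow_eq_zero_iff (n := 2) (by norm_num) |>.mp this

lemma trace_mul_pos {A B : Matrix ι ι ℝ} (hA : A.PosDef) (hB : B.PosSemidef) (hB0 : B ≠ 0) :
    0 < (A * B).trace := by
  rcases (trace_mul_nonneg hA.posSemidef hB).lt_or_eq with h | h
  · exact h
  · exfalso
    have hAB : A * B = 0 := mul_eq_zero_of_trace_eq_zero hA.posSemidef hB h.symm
    have hdet : IsUnit A.det := (ne_of_gt hA.det_pos).isUnit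
    have : B = A⁻¹ * (A * B) := by rw [← Matrix.mul_assoc, Matrix.nonsing_inv_mul A hdet, one_mul]
    rw [hAB, Matrix.mul_zero] at this
    exact hB0 this


lemma dot_transpose (A : Matrix ι ι ℝ) (x : ι → ℝ) :
    x ⬝ᵥ Aᵀ *ᵥ x = x ⬝ᵥ A *ᵥ x := by
  rw [Matrix.dotProduct_mulVec, Matrix.vecMul_transpose, dotProduct_comm]

lemma exists_quad_lb {A : Matrix ι ι ℝ} (hA : ∀ x : ι → ℝ, x ≠ 0 → 0 < x ⬝ᵥ A *ᵥ x) :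
    ∃ ε : ℝ, 0 < ε ∧ ∀ x : ι → ℝ, ε * (x ⬝ᵥ x) ≤ x ⬝ᵥ A *ᵥ x := by
  rcases isEmpty_or_nonempty ι with hι | hι
  · exact ⟨1, one_pos, fun x => by simp [dotProduct]⟩
  obtain ⟨As, hAs⟩ : ∃ As' : Matrix ι ι ℝ, As' = (2⁻¹ : ℝ) • (A + Aᵀ) := ⟨_, rfl⟩
  have hq : ∀ x : ι → ℝ, x ⬝ᵥ As *ᵥ x = x ⬝ᵥ A *ᵥ x := by
    intro x
    rw [hAs, smul_mulVec, dotProduct_smul, add_mulVec, dotProduct_add, dot_transpose,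
      smul_eq_mul]
    ring
  have hherm : As.IsHermitian := by
    rw [isHermitian_iff_transpose, hAs, transpose_smul, transpose_add, transpose_transpose,
      add_comm]
  have hpd : As.PosDef := by
    refine .of_dotProduct_mulVec_pos hherm fun x hx => ?_
    rw [star_trivial, hq]
    exact hA x hx
  obtain ⟨i0, -, hi0⟩ := Finset.exists_min_image Finset.univ hherm.eigenvalues
    ⟨Classical.arbitrary ι, Finset.mem_univ _⟩
  obtain ⟨ε, hε⟩ : ∃ e : ℝ, e = hherm.eigenvalues i0 := ⟨_, rfl⟩
  have hεpos : 0 < ε := hε ▸ hpd.eigenvalues_pos i0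
  obtain ⟨W, hW⟩ : ∃ W' : Matrix ι ι ℝ, W' = (hherm.eigenvectorUnitary : Matrix ι ι ℝ) :=
    ⟨_, rfl⟩
  have hWW : W * star W = 1 := by
    rw [hW]; exact (Matrix.mem_unitaryGroup_iff).mp hherm.eigenvectorUnitary.2
  have h1 : As = W * diagonal (RCLike.ofReal ∘ hherm.eigenvalues) * star W := by
    rw [hW]; exact hherm.spectral_theorem
  have h2 : (ε • (1 : Matrix ι ι ℝ)) = W * (ε • (1 : Matrix ι ι ℝ)) * star W := by
    rw [Matrix.mul_smul, Matrix.mul_one, Matrix.smul_mul, hWW]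
  have h3 : diagonal (RCLike.ofReal ∘ hherm.eigenvalues) - ε • (1 : Matrix ι ι ℝ)
      = diagonal (fun i => hherm.eigenvalues i - ε) := by
    ext i j
    by_cases h : i = j <;>
      simp [h, diagonal, Matrix.one_apply, RCLike.ofReal_real_eq_id]
  have hdiag : As - ε • 1 = W * (diagonal (fun i => hherm.eigenvalues i - ε)) * star W := by
    symm
    calc W * (diagonal fun i => hherm.eigenvalues i - ε) * star W
        = W * (diagonal (RCLike.ofReal ∘ hherm.eigenvalues) - ε • 1) * star W := by rw [h3]
      _ = W * diagonal (RCLike.ofReal ∘ hherm.eigenvalues) * star W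
            - W * (ε • 1) * star W := by rw [Matrix.mul_sub, Matrix.sub_mul]
      _ = As - ε • 1 := by rw [← h1, ← h2]
  have hpsd : (As - ε • 1).PosSemidef := by
    rw [hdiag, Matrix.star_eq_conjTranspose]
    exact (posSemidef_diagonal_iff.mpr fun i =>
      sub_nonneg.mpr (hε ▸ hi0 i (Finset.mem_univ _))).mul_mul_conjTranspose_same W
  refine ⟨ε, hεpos, fun x => ?_⟩
  have h5 := hpsd.dotProduct_mulVec_nonneg x
  rw [star_trivial, sub_mulVec, dotProduct_sub] at h5
  have h6 : x ⬝ᵥ (ε • (1 : Matrix ι ι ℝ)) *ᵥ x = ε * (x ⬝ᵥ x) := by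
    rw [smul_mulVec, one_mulVec, dotProduct_smul, smul_eq_mul]
  rw [h6] at h5
  linarith [hq x, h5]


lemma quad_abs_bound (C : Matrix ι ι ℝ) (x : ι → ℝ) {δ : ℝ}
    (hC : ∀ i j, |C i j| ≤ δ) (hδ : 0 ≤ δ) :
    |x ⬝ᵥ C *ᵥ x| ≤ δ * (Fintype.card ι : ℝ) * (x ⬝ᵥ x) := by
  have habs : ∀ i, |(C *ᵥ x) i| ≤ δ * ∑ j, |x j| := by
    intro i
    calc |∑ j, C i j * x j| ≤ ∑ j, |C i j * x j| := Finset.abs_sum_le_sum_abs _ _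
      _ ≤ ∑ j, δ * |x j| := by
          refine Finset.sum_le_sum fun j _ => ?_
          rw [abs_mul]
          exact mul_le_mul_of_nonneg_right (hC i j) (abs_nonneg _)
      _ = δ * ∑ j, |x j| := by rw [Finset.mul_sum]
  calc |x ⬝ᵥ C *ᵥ x| ≤ ∑ i, |x i * (C *ᵥ x) i| := Finset.abs_sum_le_sum_abs _ _
    _ ≤ ∑ i, |x i| * (δ * ∑ j, |x j|) := by
        refine Finset.sum_le_sum fun i _ => ?_
        rw [abs_mul]
        exact mul_le_mul_of_nonneg_left (habs i) (abs_nonneg _)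
    _ = δ * (∑ i, |x i|) ^ 2 := by rw [← Finset.sum_mul]; ring
    _ ≤ δ * ((Fintype.card ι : ℝ) * (x ⬝ᵥ x)) := by
        refine mul_le_mul_of_nonneg_left ?_ hδ
        have h1 := sq_sum_le_card_mul_sum_sq (s := (Finset.univ : Finset ι))
          (f := fun i => |x i|)
        have h2 : ∑ i, |x i| ^ 2 = x ⬝ᵥ x := by
          simp [dotProduct, sq_abs, sq]
        rw [h2] at h1
        simpa [Finset.card_univ] using h1
    _ = δ * (Fintype.card ι : ℝ) * (x ⬝ᵥ x) := by ring

lemma isOpen_posQuad :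
    IsOpen {A : Matrix ι ι ℝ | ∀ x : ι → ℝ, x ≠ 0 → 0 < x ⬝ᵥ A *ᵥ x} := by
  rw [isOpen_iff_mem_nhds]
  intro A hA
  obtain ⟨ε, hε, hq⟩ := exists_quad_lb hA
  set c : ℝ := (Fintype.card ι : ℝ) with hc'
  have hc : 0 ≤ c := Nat.cast_nonneg _
  set δ : ℝ := ε / (c + 1) with hδ'
  have hδ : 0 < δ := div_pos hε (by linarith)
  have hdc : δ * c < ε := by
    have h1 : δ * (c + 1) = ε := by rw [hδ']; field_simp
    nlinarith [hδ]
  have hsub : {B : Matrix ι ι ℝ | ∀ i j, |B i j - A i j| < δ}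
      ⊆ {A : Matrix ι ι ℝ | ∀ x : ι → ℝ, x ≠ 0 → 0 < x ⬝ᵥ A *ᵥ x} := by
    intro B hB x hx
    have hxx := dotProduct_self_pos hx
    have hbound := quad_abs_bound (B - A) x
      (fun i j => le_of_lt (by simpa using hB i j)) hδ.le
    have hsplit : x ⬝ᵥ B *ᵥ x = x ⬝ᵥ A *ᵥ x + x ⬝ᵥ (B - A) *ᵥ x := by
      rw [sub_mulVec, dotProduct_sub]; ring
    have hneg := neg_abs_le (x ⬝ᵥ (B - A) *ᵥ x)
    have hmul : 0 < (ε - δ * c) * (x ⬝ᵥ x) := mul_pos (by linarith) hxx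
    show 0 < x ⬝ᵥ B *ᵥ x
    rw [hsplit]
    nlinarith [hq x]
  have hop : IsOpen {B : Matrix ι ι ℝ | ∀ i j, |B i j - A i j| < δ} := by
    have heq : {B : Matrix ι ι ℝ | ∀ i j, |B i j - A i j| < δ}
        = ⋂ i, ⋂ j, (fun B : Matrix ι ι ℝ => B i j) ⁻¹' Metric.ball (A i j) δ := by
      ext B
      simp [Real.dist_eq]
    rw [heq]
    exact isOpen_iInter_of_finite fun i => isOpen_iInter_of_finite fun j =>
      Metric.isOpen_ball.preimage ((continuous_apply j).comp (continuous_apply i))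
  exact Filter.mem_of_superset (hop.mem_nhds (by simp only [Set.mem_setOf_eq, sub_self, abs_zero]; exact fun i j => hδ)) hsub


lemma trace_rep (f : Matrix ι ι ℝ →ₗ[ℝ] ℝ) (A : Matrix ι ι ℝ) :
    ((Matrix.of fun i j => f (single j i 1)) * A).trace = f A := by
  calc ((Matrix.of fun i j => f (single j i 1)) * A).trace
      = ∑ k, ∑ l, f (single l k 1) * A l k := by
        simp [Matrix.trace, Matrix.diag, Matrix.mul_apply]
    _ = ∑ l, ∑ k, A l k * f (single l k 1) := by
        rw [Finset.sum_comm]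
        exact Finset.sum_congr rfl fun l _ => Finset.sum_congr rfl fun k _ => mul_comm _ _
    _ = f A := by
        conv_rhs => rw [matrix_eq_sum_single A]
        rw [map_sum]
        refine Finset.sum_congr rfl fun l _ => ?_
        rw [map_sum]
        refine Finset.sum_congr rfl fun k _ => ?_
        rw [show single l k (A l k) = (A l k) • single l k 1 by
          rw [smul_single, smul_eq_mul, mul_one], _root_.map_smul, smul_eq_mul]

lemma vecMulVec_mulVec (x y : ι → ℝ) : vecMulVec x x *ᵥ y = (x ⬝ᵥ y) • x := by
  ext i
  simp only [mulVec, vecMulVec_apply, dotProduct, Pi.smul_apply, smul_eq_mul, Finset.sum_mul]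
  exact Finset.sum_congr rfl fun j _ => by ring

lemma posSemidef_vecMulVec (x : ι → ℝ) : (vecMulVec x x).PosSemidef := by
  refine .of_dotProduct_mulVec_nonneg ?_ ?_
  · rw [isHermitian_iff_transpose]
    ext i j
    simp [vecMulVec_apply, transpose_apply, mul_comm]
  · intro y
    rw [star_trivial, vecMulVec_mulVec, dotProduct_smul, smul_eq_mul, dotProduct_comm y x]
    exact mul_self_nonneg _

lemma trace_mul_vecMulVec (Y : Matrix ι ι ℝ) (x : ι → ℝ) :
    (Y * vecMulVec x x).trace = x ⬝ᵥ Y *ᵥ x := by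
  simp only [Matrix.trace, Matrix.diag_apply, Matrix.mul_apply, vecMulVec_apply, dotProduct,
    mulVec, Finset.mul_sum]
  exact Finset.sum_congr rfl fun i _ => Finset.sum_congr rfl fun k _ => by ring

lemma trace_transpose_mul_symm (Z A : Matrix ι ι ℝ) (hA : Aᵀ = A) :
    (Zᵀ * A).trace = (Z * A).trace := by
  conv_lhs => rw [← hA]
  rw [← transpose_mul, trace_transpose, trace_mul_comm]


lemma stdBasis_transpose (i j : ι) : (single i j (1:ℝ))ᵀ = single j i 1 := by
  ext a b
  simp [single, and_comm]

end Stmt13Aux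

/-- `E^{ij}`: the symmetric matrix with 1's in entries `(i,j)` and `(j,i)`, 0 elsewhere. -/
def Eij {n : ℕ} (i j : Fin n) : Matrix (Fin n) (Fin n) ℝ :=
  Matrix.single i j 1 + Matrix.single j i 1

lemma Eij_transpose {n : ℕ} (i j : Fin n) : (Eij i j)ᵀ = Eij i j := by
  rw [Eij, transpose_add, Stmt13Aux.stdBasis_transpose, Stmt13Aux.stdBasis_transpose, add_comm]

/-- For a framework `(G,p)` with projected Gram matrix `X = Vᵀ P Pᵀ V`, exactly one
of the following holds: (1) `X + Σ y_ij M^{ij} ≻ 0` for some `y`; (2) there is a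
nonzero PSD `Y` with `XY = 0` and `trace(Y M^{ij}) = 0` for all missing edges. -/
theorem stmt13 (n r : ℕ) (G : SimpleGraph (Fin n)) [DecidableRel G.Adj]
    (P : Matrix (Fin n) (Fin r) ℝ) (hPe : Pᵀ *ᵥ (fun _ => (1 : ℝ)) = 0)
    (V : Matrix (Fin n) (Fin (n - 1)) ℝ)
    (hVe : Vᵀ *ᵥ (fun _ => (1 : ℝ)) = 0) (hVV : Vᵀ * V = 1)
    (X : Matrix (Fin (n - 1)) (Fin (n - 1)) ℝ) (hX : X = Vᵀ * P * Pᵀ * V)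
    (M : {q : Fin n × Fin n // q.1 < q.2 ∧ ¬ G.Adj q.1 q.2} →
        Matrix (Fin (n - 1)) (Fin (n - 1)) ℝ)
    (hM : ∀ q, M q = (-(1/2) : ℝ) • (Vᵀ * Eij q.1.1 q.1.2 * V)) :
    Xor'
      (∃ y : {q : Fin n × Fin n // q.1 < q.2 ∧ ¬ G.Adj q.1 q.2} → ℝ,
        (X + ∑ q, y q • M q).PosDef)
      (∃ Y : Matrix (Fin (n - 1)) (Fin (n - 1)) ℝ, Y.PosSemidef ∧ Y ≠ 0 ∧
        X * Y = 0 ∧ ∀ q, (Y * M q).trace = 0) := by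
  classical
  have hXps : X.PosSemidef := by
    have h : X = (Vᵀ * P) * (Vᵀ * P)ᴴ := by
      rw [hX, conjTranspose_eq_transpose_of_trivial, transpose_mul, transpose_transpose,
        Matrix.mul_assoc]
    rw [h]
    exact posSemidef_self_mul_conjTranspose _
  have hXsym : Xᵀ = X := Stmt13Aux.isHermitian_iff_transpose.mp hXps.1
  have hMsym : ∀ q, (M q)ᵀ = M q := by
    intro q
    rw [hM q, transpose_smul]
    congr 1
    rw [transpose_mul, transpose_mul, transpose_transpose, Eij_transpose, ← Matrix.mul_assoc]
  have hherm : ∀ y : {q : Fin n × Fin n // q.1 < q.2 ∧ ¬ G.Adj q.1 q.2} → ℝ,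
      (X + ∑ q, y q • M q)ᵀ = X + ∑ q, y q • M q := by
    intro y
    rw [transpose_add, hXsym, Matrix.transpose_sum]
    congr 1
    exact Finset.sum_congr rfl fun q _ => by rw [transpose_smul, hMsym]
  by_cases h1 : ∃ y : {q : Fin n × Fin n // q.1 < q.2 ∧ ¬ G.Adj q.1 q.2} → ℝ,
      (X + ∑ q, y q • M q).PosDef
  · left
    refine ⟨h1, ?_⟩
    rintro ⟨Y, hY, hY0, hXY, htr⟩
    obtain ⟨y, hy⟩ := h1
    have hpos := Stmt13Aux.trace_mul_pos hy hY hY0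
    have hzero : ((X + ∑ q, y q • M q) * Y).trace = 0 := by
      rw [Matrix.add_mul, trace_add, Finset.sum_mul, trace_sum]
      simp only [Matrix.smul_mul, trace_smul, smul_eq_mul]
      rw [hXY, trace_zero, zero_add]
      refine Finset.sum_eq_zero fun q _ => ?_
      rw [trace_mul_comm, htr q, mul_zero]
    rw [hzero] at hpos
    exact lt_irrefl 0 hpos
  · right
    refine ⟨?_, h1⟩
    set U : Set (Matrix (Fin (n-1)) (Fin (n-1)) ℝ) :=
      {A | ∀ x : Fin (n-1) → ℝ, x ≠ 0 → 0 < x ⬝ᵥ A *ᵥ x} with hU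
    set S : Set (Matrix (Fin (n-1)) (Fin (n-1)) ℝ) :=
      Set.range (fun y : {q : Fin n × Fin n // q.1 < q.2 ∧ ¬ G.Adj q.1 q.2} → ℝ =>
        X + ∑ q, y q • M q) with hS
    have hUopen : IsOpen U := by rw [hU]; exact Stmt13Aux.isOpen_posQuad
    have hUconv : Convex ℝ U := by
      rw [hU]
      intro A hA B hB a b ha hb hab x hx
      have he : (a • A + b • B) *ᵥ x = a • (A *ᵥ x) + b • (B *ᵥ x) := by
        rw [add_mulVec, smul_mulVec, smul_mulVec]
      show 0 < x ⬝ᵥ (a • A + b • B) *ᵥ x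
      rw [he, dotProduct_add, dotProduct_smul, dotProduct_smul, smul_eq_mul, smul_eq_mul]
      rcases ha.eq_or_lt with h | h
      · rw [← h] at hab ⊢
        rw [zero_add] at hab
        rw [hab]
        have := hB x hx
        linarith
      · have h2 : 0 ≤ b * (x ⬝ᵥ B *ᵥ x) := mul_nonneg hb (le_of_lt (hB x hx))
        have := mul_pos h (hA x hx)
        linarith
    have hSconv : Convex ℝ S := by
      rw [hS]
      rintro A ⟨y1, rfl⟩ B ⟨y2, rfl⟩ a b ha hb hab
      refine ⟨fun q => a * y1 q + b * y2 q, ?_⟩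
      show X + ∑ q, (a * y1 q + b * y2 q) • M q
          = a • (X + ∑ q, y1 q • M q) + b • (X + ∑ q, y2 q • M q)
      have hsum : ∑ q, (a * y1 q + b * y2 q) • M q
          = (∑ q, (a * y1 q) • M q) + ∑ q, (b * y2 q) • M q := by
        rw [← Finset.sum_add_distrib]
        exact Finset.sum_congr rfl fun q _ => add_smul _ _ _
      have hX2 : a • X + b • X = X := by rw [← add_smul, hab, one_smul]
      simp only [smul_add, Finset.smul_sum, smul_smul]
      rw [hsum]
      conv_lhs => rw [← hX2]
      abel
    have hdisj : Disjoint U S := by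
      rw [Set.disjoint_left]
      rintro A hAU hAS
      rw [hS] at hAS
      obtain ⟨y, rfl⟩ := hAS
      refine h1 ⟨y, .of_dotProduct_mulVec_pos (Stmt13Aux.isHermitian_iff_transpose.mpr (hherm y)) fun x hx => ?_⟩
      rw [star_trivial]
      exact hAU x hx
    obtain ⟨f, c, hfU, hfS⟩ := geometric_hahn_banach_open hUconv hUopen hSconv hdisj
    have hsmul1 : ∀ ε : ℝ, 0 < ε → (ε • (1 : Matrix (Fin (n-1)) (Fin (n-1)) ℝ)) ∈ U := by
      intro ε hε
      rw [hU]
      intro x hx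
      rw [smul_mulVec, one_mulVec, dotProduct_smul, smul_eq_mul]
      exact mul_pos hε (Stmt13Aux.dotProduct_self_pos hx)
    have hf1lt : ∀ ε : ℝ, 0 < ε → ε * f 1 < c := by
      intro ε hε
      have := hfU _ (hsmul1 ε hε)
      rwa [_root_.map_smul, smul_eq_mul] at this
    have hc0 : 0 ≤ c := by
      by_contra hc
      push_neg at hc
      have hf1 : f 1 < 0 := by
        have := hf1lt 1 one_pos
        linarith
      have h2 := hf1lt (c / (2 * f 1)) (div_pos_of_neg_of_neg hc (by linarith))
      have hf1' : f 1 ≠ 0 := ne_of_lt hf1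
      have h3 : (c / (2 * f 1)) * f 1 = c / 2 := by
        field_simp
      rw [h3] at h2
      linarith
    have hPSDf : ∀ A : Matrix (Fin (n-1)) (Fin (n-1)) ℝ, A.PosSemidef → f A ≤ 0 := by
      intro A hA
      by_contra hfA
      push_neg at hfA
      set t : ℝ := (c + 1) / f A with ht'
      have ht : 0 < t := div_pos (by linarith) hfA
      set ε : ℝ := 1 / (|f 1| + 1) with hε'
      have hεpos : 0 < ε := by positivity
      have hmem : t • A + ε • (1 : Matrix (Fin (n-1)) (Fin (n-1)) ℝ) ∈ U := by
        rw [hU]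
        intro x hx
        rw [add_mulVec, smul_mulVec, smul_mulVec, one_mulVec, dotProduct_add,
          dotProduct_smul, dotProduct_smul, smul_eq_mul, smul_eq_mul]
        have hq1 := hA.dotProduct_mulVec_nonneg x
        rw [star_trivial] at hq1
        have h5 := mul_pos hεpos (Stmt13Aux.dotProduct_self_pos hx)
        nlinarith [mul_nonneg ht.le hq1]
      have hlt := hfU _ hmem
      rw [map_add, _root_.map_smul, _root_.map_smul, smul_eq_mul, smul_eq_mul] at hlt
      have htfA : t * f A = c + 1 := by
        rw [ht']
        field_simp
      have hεf1 : -1 ≤ ε * f 1 := by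
        have h6 : ε * |f 1| ≤ 1 := by
          rw [hε', div_mul_eq_mul_div, one_mul]
          exact div_le_one_of_le₀ (by linarith) (by positivity)
        nlinarith [neg_abs_le (f 1), abs_nonneg (f 1)]
      linarith
    have hfM : ∀ q, f (M q) = 0 := by
      intro q
      have hline : ∀ t : ℝ, c ≤ f X + t * f (M q) := by
        intro t
        have hmem : (X + ∑ q', (Pi.single q t : _ → ℝ) q' • M q') ∈ S := by
          rw [hS]; exact ⟨Pi.single q t, rfl⟩
        have h7 := hfS _ hmem
        rw [map_add] at h7
        have hsum : (∑ q', (Pi.single q t : _ → ℝ) q' • M q') = t • M q := by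
          simp [Pi.single_apply, ite_smul]
        rw [hsum, _root_.map_smul, smul_eq_mul] at h7
        exact h7
      by_contra hfq
      have h8 := hline ((c - 1 - f X) / f (M q))
      rw [div_mul_cancel₀ _ hfq] at h8
      linarith
    have hcX : c ≤ f X := by
      have hmem : X ∈ S := by
        rw [hS]
        exact ⟨0, by simp⟩
      exact hfS _ hmem
    set Z : Matrix (Fin (n-1)) (Fin (n-1)) ℝ :=
      Matrix.of fun i j => f (single j i 1) with hZ
    set Y : Matrix (Fin (n-1)) (Fin (n-1)) ℝ := (-(2⁻¹ : ℝ)) • (Z + Zᵀ) with hY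
    have hZrep : ∀ A : Matrix (Fin (n-1)) (Fin (n-1)) ℝ, (Z * A).trace = f A := by
      intro A
      exact Stmt13Aux.trace_rep (f.toLinearMap) A
    have hrep : ∀ A : Matrix (Fin (n-1)) (Fin (n-1)) ℝ, Aᵀ = A → (Y * A).trace = - f A := by
      intro A hAsym
      rw [hY, Matrix.smul_mul, trace_smul, Matrix.add_mul, trace_add,
        Stmt13Aux.trace_transpose_mul_symm Z A hAsym, hZrep A, smul_eq_mul]
      ring
    have hYsym : Yᵀ = Y := by
      rw [hY, transpose_smul, transpose_add, transpose_transpose, add_comm]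
    have hYpsd : Y.PosSemidef := by
      refine .of_dotProduct_mulVec_nonneg (Stmt13Aux.isHermitian_iff_transpose.mpr hYsym) fun x => ?_
      rw [star_trivial, ← Stmt13Aux.trace_mul_vecMulVec,
        hrep _ (Stmt13Aux.isHermitian_iff_transpose.mp (Stmt13Aux.posSemidef_vecMulVec x).1)]
      exact neg_nonneg.mpr (hPSDf _ (Stmt13Aux.posSemidef_vecMulVec x))
    have hY0 : Y ≠ 0 := by
      intro h0
      have hf1 : f 1 = 0 := by
        have h9 := hrep 1 transpose_one
        rw [h0, Matrix.zero_mul, trace_zero] at h9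
        linarith
      have hfX0 : f X = 0 := by
        have h9 := hrep X hXsym
        rw [h0, Matrix.zero_mul, trace_zero] at h9
        linarith
      have h1U : (1 : Matrix (Fin (n-1)) (Fin (n-1)) ℝ) ∈ U := by
        rw [hU]
        intro x hx
        rw [one_mulVec]
        exact Stmt13Aux.dotProduct_self_pos hx
      have h10 := hfU _ h1U
      rw [hf1] at h10
      linarith
    have hXY : X * Y = 0 := by
      have hn : (X * Y).trace ≤ 0 := by
        rw [trace_mul_comm, hrep X hXsym]
        linarith
      have hp : 0 ≤ (X * Y).trace := Stmt13Aux.trace_mul_nonneg hXps hYpsd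
      exact Stmt13Aux.mul_eq_zero_of_trace_eq_zero hXps hYpsd (le_antisymm hn hp)
    exact ⟨Y, hYpsd, hY0, hXY, fun q => by rw [hrep _ (hMsym q), hfM q, neg_zero]⟩
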